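/- With m: GL2 → GL7 the Levi embedding and n(a1,a2,a3,a4,t) ∈ GL7 the explicit unipotent matrices realizing N inside SO(3,4), the adjoint action formula holds: m·n₁(a, z)·m⁻¹ = n₁(det(m)⁻¹ρ3(m)a, det(m)·z), where n₁(a,z) = n(a1,a2,a3,a4, z/2 - (a1a4/2 - 3a2a3/2)) are the modified Heisenberg coordinates, ρ3 is the symmetric-cube action on binary cubic coefficients, over any ℚ-algebra R and m ∈ GL2(R). -/
import Mathlib


open Matrix

/-- The explicit 7×7 unipotent matrices n(a1,a2,a3,a4,t) of the Heisenberg radical. -/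
def nMat {R : Type*} [CommRing R] (a1 a2 a3 a4 t : R) : Matrix (Fin 7) (Fin 7) R :=
  !![1, 0, -a3, 2*a2, -a1, a2^2 - a1*a3, 2*a2*a3 - a1*a4 - t;
     0, 1, -a4, 2*a3, -a2, -(a2*a3) + t, a3^2 - a2*a4;
     0, 0, 1, 0, 0, a1, a2;
     0, 0, 0, 1, 0, a2, a3;
     0, 0, 0, 0, 1, a3, a4;
     0, 0, 0, 0, 0, 1, 0;
     0, 0, 0, 0, 0, 0, 1]

/-- The modified Heisenberg coordinates: n1(a, z) = n(a, z/2 - (a1a4/2 - 3a2a3/2)),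
over a ℚ-algebra R. -/
noncomputable def n1Mat {R : Type*} [CommRing R] [Algebra ℚ R]
    (a1 a2 a3 a4 z : R) : Matrix (Fin 7) (Fin 7) R :=
  nMat a1 a2 a3 a4 ((z - a1*a4 + 3*a2*a3) * algebraMap ℚ R (1/2))

/-- The explicit 7×7 Levi embedding m((a b; c d)), with e playing the role of
1/(ad-bc). -/
def mMat {R : Type*} [CommRing R] (a b c d e : R) : Matrix (Fin 7) (Fin 7) R :=
  !![d, c, 0, 0, 0, 0, 0;
     b, a, 0, 0, 0, 0, 0;
     0, 0, d^2*e, 2*c*d*e, c^2*e, 0, 0;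
     0, 0, b*d*e, (a*d + b*c)*e, a*c*e, 0, 0;
     0, 0, b^2*e, 2*a*b*e, a^2*e, 0, 0;
     0, 0, 0, 0, 0, a*e, -(b*e);
     0, 0, 0, 0, 0, -(c*e), d*e]

/-- The symmetric-cube action of (a b; c d) on binary cubic coefficient quadruples. -/
def rho3 {R : Type*} [CommRing R] (a b c d : R) (x : R × R × R × R) : R × R × R × R :=
  match x with
  | (w1, w2, w3, w4) =>
    (w1*d^3 + 3*w2*d^2*c + 3*w3*d*c^2 + w4*c^3,
     w1*d^2*b + w2*(2*d*b*c + d^2*a) + w3*(b*c^2 + 2*d*c*a) + w4*c^2*a,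
     w1*d*b^2 + w2*(b^2*c + 2*d*b*a) + w3*(2*b*c*a + d*a^2) + w4*c*a^2,
     w1*b^3 + 3*w2*b^2*a + 3*w3*b*a^2 + w4*a^3)

@[simp] theorem cons_val_five' {α : Type*} (x : α) (u : Fin 6 → α) :
    Matrix.vecCons x u 5 = u 4 := rfl

@[simp] theorem cons_val_six' {α : Type*} (x : α) (u : Fin 6 → α) :
    Matrix.vecCons x u 6 = u 5 := rfl

@[simp] theorem cons_val_five'' {α : Type*} (x : α) (u : Fin 5 → α) :
    Matrix.vecCons x u 5 = u 4 := rfl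

set_option maxHeartbeats 4000000 in
/-- The adjoint action formula: m·n1(a, z)·m⁻¹ = n1(det(m)⁻¹ρ3(m)a, det(m)·z),
where m = (a b; c d) ∈ GL2(R), e = det(m)⁻¹ (so m⁻¹ = e·(d -b; -c a) with det
inverse ad-bc), over any ℚ-algebra R. -/
theorem stmt16 {R : Type*} [CommRing R] [Algebra ℚ R] (a b c d e : R)
    (hΔ : (a*d - b*c) * e = 1) (w1 w2 w3 w4 z : R) :
    mMat a b c d e * n1Mat w1 w2 w3 w4 z * mMat (d*e) (-(b*e)) (-(c*e)) (a*e) (a*d - b*c)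
      = n1Mat (e * (rho3 a b c d (w1, w2, w3, w4)).1)
          (e * (rho3 a b c d (w1, w2, w3, w4)).2.1)
          (e * (rho3 a b c d (w1, w2, w3, w4)).2.2.1)
          (e * (rho3 a b c d (w1, w2, w3, w4)).2.2.2)
          ((a*d - b*c) * z) := by
  
  have hh2 : (algebraMap ℚ R) (1/2) * 2 = 1 := by
    rw [show (2:R) = (algebraMap ℚ R) 2 from (_root_.map_ofNat _ 2).symm, ← _root_.map_mul]
    norm_num
  simp only [n1Mat, rho3]
  set hh := (algebraMap ℚ R) (1/2) with hhdef
  ext i j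
  fin_cases i <;> fin_cases j
  · simp [Matrix.mul_apply, Fin.sum_univ_seven, mMat, nMat, cons_val_five', cons_val_six', cons_val_five'', Matrix.vecHead, Matrix.vecTail]
    linear_combination (1) * hΔ
  · simp [Matrix.mul_apply, Fin.sum_univ_seven, mMat, nMat, cons_val_five', cons_val_six', cons_val_five'', Matrix.vecHead, Matrix.vecTail]
    linear_combination (0 : R) * hΔ
  · simp [Matrix.mul_apply, Fin.sum_univ_seven, mMat, nMat, cons_val_five', cons_val_six', cons_val_five'', Matrix.vecHead, Matrix.vecTail]
    linear_combination (-a^2*d*e*w3 - a^2*c*e*w4 - 2*a*b*d*e*w2 - 2*a*b*c*e*w3 - b^2*d*e*w1 - b^2*c*e*w2) * hΔ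
  · simp [Matrix.mul_apply, Fin.sum_univ_seven, mMat, nMat, cons_val_five', cons_val_six', cons_val_five'', Matrix.vecHead, Matrix.vecTail]
    linear_combination (2*a*d^2*e*w2 + 4*a*c*d*e*w3 + 2*a*c^2*e*w4 + 2*b*d^2*e*w1 + 4*b*c*d*e*w2 + 2*b*c^2*e*w3) * hΔ
  · simp [Matrix.mul_apply, Fin.sum_univ_seven, mMat, nMat, cons_val_five', cons_val_six', cons_val_five'', Matrix.vecHead, Matrix.vecTail]
    linear_combination (-d^3*e*w1 - 3*c*d^2*e*w2 - 3*c^2*d*e*w3 - c^3*e*w4) * hΔ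
  · simp [Matrix.mul_apply, Fin.sum_univ_seven, mMat, nMat, cons_val_five', cons_val_six', cons_val_five'', Matrix.vecHead, Matrix.vecTail]
    linear_combination (a*d^3*e*w1*w3 - a*d^3*e*w2^2 + a*c*d^2*e*w1*w4 - a*c*d^2*e*w2*w3 + a*c^2*d*e*w2*w4 - a*c^2*d*e*w3^2 - b*c*d^2*e*w1*w3 + b*c*d^2*e*w2^2 - b*c^2*d*e*w1*w4 + b*c^2*d*e*w2*w3 - b*c^3*e*w2*w4 + b*c^3*e*w3^2) * hΔ
  · simp [Matrix.mul_apply, Fin.sum_univ_seven, mMat, nMat, cons_val_five', cons_val_six', cons_val_five'', Matrix.vecHead, Matrix.vecTail]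
    linear_combination (a^2*d^2*e*w1*w4*hh - a^2*d^2*e*w2*w3*hh + 2*a^2*c*d*e*w2*w4*hh - 2*a^2*c*d*e*w3^2*hh + 2*a*b*d^2*e*w1*w3*hh - 2*a*b*d^2*e*w2^2*hh - 2*a*b*c^2*e*w2*w4*hh + 2*a*b*c^2*e*w3^2*hh - 2*b^2*c*d*e*w1*w3*hh + 2*b^2*c*d*e*w2^2*hh - b^2*c^2*e*w1*w4*hh + b^2*c^2*e*w2*w3*hh - a*d*z*hh + b*c*z*hh) * hΔ + (-a^3*d^3*e^2*w1*w4 + 2*a^3*d^3*e^2*w2*w3 - a^3*c*d^2*e^2*w2*w4 + 4*a^3*c*d^2*e^2*w3^2 + 3*a^3*c^2*d*e^2*w3*w4 + a^3*c^3*e^2*w4^2 - a^2*b*d^3*e^2*w1*w3 + 4*a^2*b*d^3*e^2*w2^2 + 2*a^2*b*c*d^2*e^2*w1*w4 + 7*a^2*b*c*d^2*e^2*w2*w3 + 8*a^2*b*c^2*d*e^2*w2*w4 + a^2*b*c^2*d*e^2*w3^2 + 3*a^2*b*c^3*e^2*w3*w4 + 3*a*b^2*d^3*e^2*w1*w2 +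 8*a*b^2*c*d^2*e^2*w1*w3 + a*b^2*c*d^2*e^2*w2^2 + 2*a*b^2*c^2*d*e^2*w1*w4 + 7*a*b^2*c^2*d*e^2*w2*w3 - a*b^2*c^3*e^2*w2*w4 + 4*a*b^2*c^3*e^2*w3^2 + b^3*d^3*e^2*w1^2 + 3*b^3*c*d^2*e^2*w1*w2 - b^3*c^2*d*e^2*w1*w3 + 4*b^3*c^2*d*e^2*w2^2 - b^3*c^3*e^2*w1*w4 + 2*b^3*c^3*e^2*w2*w3 + a^2*d^2*e*w1*w4 - 2*a^2*d^2*e*w2*w3 + a^2*c*d*e*w2*w4 - a^2*c*d*e*w3^2 + a*b*d^2*e*w1*w3 - a*b*d^2*e*w2^2 - a*b*c*d*e*w1*w4 + 3*a*b*c*d*e*w2*w3 - a*b*c^2*e*w2*w4 + a*b*c^2*e*w3^2 - b^2*c*d*e*w1*w3 + b^2*c*d*e*w2^2 - b^2*c^2*e*w2*w3) * hh2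
  · simp [Matrix.mul_apply, Fin.sum_univ_seven, mMat, nMat, cons_val_five', cons_val_six', cons_val_five'', Matrix.vecHead, Matrix.vecTail]
    linear_combination (0 : R) * hΔ
  · simp [Matrix.mul_apply, Fin.sum_univ_seven, mMat, nMat, cons_val_five', cons_val_six', cons_val_five'', Matrix.vecHead, Matrix.vecTail]
    linear_combination (1) * hΔ
  · simp [Matrix.mul_apply, Fin.sum_univ_seven, mMat, nMat, cons_val_five', cons_val_six', cons_val_five'', Matrix.vecHead, Matrix.vecTail]
    linear_combination (-a^3*e*w4 - 3*a^2*b*e*w3 - 3*a*b^2*e*w2 - b^3*e*w1) * hΔ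
  · simp [Matrix.mul_apply, Fin.sum_univ_seven, mMat, nMat, cons_val_five', cons_val_six', cons_val_five'', Matrix.vecHead, Matrix.vecTail]
    linear_combination (2*a^2*d*e*w3 + 2*a^2*c*e*w4 + 4*a*b*d*e*w2 + 4*a*b*c*e*w3 + 2*b^2*d*e*w1 + 2*b^2*c*e*w2) * hΔ
  · simp [Matrix.mul_apply, Fin.sum_univ_seven, mMat, nMat, cons_val_five', cons_val_six', cons_val_five'', Matrix.vecHead, Matrix.vecTail]
    linear_combination (-a*d^2*e*w2 - 2*a*c*d*e*w3 - a*c^2*e*w4 - b*d^2*e*w1 - 2*b*c*d*e*w2 - b*c^2*e*w3) * hΔ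
  · simp [Matrix.mul_apply, Fin.sum_univ_seven, mMat, nMat, cons_val_five', cons_val_six', cons_val_five'', Matrix.vecHead, Matrix.vecTail]
    linear_combination (a^2*d^2*e*w1*w4*hh - a^2*d^2*e*w2*w3*hh + 2*a^2*c*d*e*w2*w4*hh - 2*a^2*c*d*e*w3^2*hh + 2*a*b*d^2*e*w1*w3*hh - 2*a*b*d^2*e*w2^2*hh - 2*a*b*c^2*e*w2*w4*hh + 2*a*b*c^2*e*w3^2*hh - 2*b^2*c*d*e*w1*w3*hh + 2*b^2*c*d*e*w2^2*hh - b^2*c^2*e*w1*w4*hh + b^2*c^2*e*w2*w3*hh + a*d*z*hh - b*c*z*hh) * hΔ + (-a^3*d^3*e^2*w2*w3 - a^3*c*d^2*e^2*w2*w4 - 2*a^3*c*d^2*e^2*w3^2 - 3*a^3*c^2*d*e^2*w3*w4 - a^3*c^3*e^2*w4^2 - a^2*b*d^3*e^2*w1*w3 - 2*a^2*b*d^3*e^2*w2^2 - a^2*b*c*d^2*e^2*w1*w4 - 8*a^2*b*c*d^2*e^2*w2*w3 - 4*a^2*b*c^2*d*e^2*w2*w4 - 5*a^2*b*c^2*d*e^2*w3^2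 - 3*a^2*b*c^3*e^2*w3*w4 - 3*a*b^2*d^3*e^2*w1*w2 - 4*a*b^2*c*d^2*e^2*w1*w3 - 5*a*b^2*c*d^2*e^2*w2^2 - a*b^2*c^2*d*e^2*w1*w4 - 8*a*b^2*c^2*d*e^2*w2*w3 - a*b^2*c^3*e^2*w2*w4 - 2*a*b^2*c^3*e^2*w3^2 - b^3*d^3*e^2*w1^2 - 3*b^3*c*d^2*e^2*w1*w2 - b^3*c^2*d*e^2*w1*w3 - 2*b^3*c^2*d*e^2*w2^2 - b^3*c^3*e^2*w2*w3 + a^2*d^2*e*w2*w3 + a^2*c*d*e*w2*w4 - a^2*c*d*e*w3^2 + a*b*d^2*e*w1*w3 - a*b*d^2*e*w2^2 + a*b*c*d*e*w1*w4 - 3*a*b*c*d*e*w2*w3 - a*b*c^2*e*w2*w4 + a*b*c^2*e*w3^2 - b^2*c*d*e*w1*w3 + b^2*c*d*e*w2^2 - b^2*c^2*e*w1*w4 + 2*b^2*c^2*e*w2*w3) * hh2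
  · simp [Matrix.mul_apply, Fin.sum_univ_seven, mMat, nMat, cons_val_five', cons_val_six', cons_val_five'', Matrix.vecHead, Matrix.vecTail]
    linear_combination (a^3*d*e*w2*w4 - a^3*d*e*w3^2 + a^2*b*d*e*w1*w4 - a^2*b*d*e*w2*w3 - a^2*b*c*e*w2*w4 + a^2*b*c*e*w3^2 + a*b^2*d*e*w1*w3 - a*b^2*d*e*w2^2 - a*b^2*c*e*w1*w4 + a*b^2*c*e*w2*w3 - b^3*c*e*w1*w3 + b^3*c*e*w2^2) * hΔ
  · simp [Matrix.mul_apply, Fin.sum_univ_seven, mMat, nMat, cons_val_five', cons_val_six', cons_val_five'', Matrix.vecHead, Matrix.vecTail]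
  · simp [Matrix.mul_apply, Fin.sum_univ_seven, mMat, nMat, cons_val_five', cons_val_six', cons_val_five'', Matrix.vecHead, Matrix.vecTail]
  · simp [Matrix.mul_apply, Fin.sum_univ_seven, mMat, nMat, cons_val_five', cons_val_six', cons_val_five'', Matrix.vecHead, Matrix.vecTail]
    linear_combination (a^2*d^2*e^2 - 2*a*b*c*d*e^2 + b^2*c^2*e^2 + a*d*e - b*c*e + 1) * hΔ
  · simp [Matrix.mul_apply, Fin.sum_univ_seven, mMat, nMat, cons_val_five', cons_val_six', cons_val_five'', Matrix.vecHead, Matrix.vecTail]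
    linear_combination (0 : R) * hΔ
  · simp [Matrix.mul_apply, Fin.sum_univ_seven, mMat, nMat, cons_val_five', cons_val_six', cons_val_five'', Matrix.vecHead, Matrix.vecTail]
    linear_combination (0 : R) * hΔ
  · simp [Matrix.mul_apply, Fin.sum_univ_seven, mMat, nMat, cons_val_five', cons_val_six', cons_val_five'', Matrix.vecHead, Matrix.vecTail]
    linear_combination (d^3*e*w1 + 3*c*d^2*e*w2 + 3*c^2*d*e*w3 + c^3*e*w4) * hΔ
  · simp [Matrix.mul_apply, Fin.sum_univ_seven, mMat, nMat, cons_val_five', cons_val_six', cons_val_five'', Matrix.vecHead, Matrix.vecTail]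
    linear_combination (a*d^2*e*w2 + 2*a*c*d*e*w3 + a*c^2*e*w4 + b*d^2*e*w1 + 2*b*c*d*e*w2 + b*c^2*e*w3) * hΔ
  · simp [Matrix.mul_apply, Fin.sum_univ_seven, mMat, nMat, cons_val_five', cons_val_six', cons_val_five'', Matrix.vecHead, Matrix.vecTail]
  · simp [Matrix.mul_apply, Fin.sum_univ_seven, mMat, nMat, cons_val_five', cons_val_six', cons_val_five'', Matrix.vecHead, Matrix.vecTail]
  · simp [Matrix.mul_apply, Fin.sum_univ_seven, mMat, nMat, cons_val_five', cons_val_six', cons_val_five'', Matrix.vecHead, Matrix.vecTail]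
    linear_combination (0 : R) * hΔ
  · simp [Matrix.mul_apply, Fin.sum_univ_seven, mMat, nMat, cons_val_five', cons_val_six', cons_val_five'', Matrix.vecHead, Matrix.vecTail]
    linear_combination (a^2*d^2*e^2 - 2*a*b*c*d*e^2 + b^2*c^2*e^2 + a*d*e - b*c*e + 1) * hΔ
  · simp [Matrix.mul_apply, Fin.sum_univ_seven, mMat, nMat, cons_val_five', cons_val_six', cons_val_five'', Matrix.vecHead, Matrix.vecTail]
    linear_combination (0 : R) * hΔ
  · simp [Matrix.mul_apply, Fin.sum_univ_seven, mMat, nMat, cons_val_five', cons_val_six', cons_val_five'', Matrix.vecHead, Matrix.vecTail]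
    linear_combination (a*d^2*e*w2 + 2*a*c*d*e*w3 + a*c^2*e*w4 + b*d^2*e*w1 + 2*b*c*d*e*w2 + b*c^2*e*w3) * hΔ
  · simp [Matrix.mul_apply, Fin.sum_univ_seven, mMat, nMat, cons_val_five', cons_val_six', cons_val_five'', Matrix.vecHead, Matrix.vecTail]
    linear_combination (a^2*d*e*w3 + a^2*c*e*w4 + 2*a*b*d*e*w2 + 2*a*b*c*e*w3 + b^2*d*e*w1 + b^2*c*e*w2) * hΔ
  · simp [Matrix.mul_apply, Fin.sum_univ_seven, mMat, nMat, cons_val_five', cons_val_six', cons_val_five'', Matrix.vecHead, Matrix.vecTail]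
  · simp [Matrix.mul_apply, Fin.sum_univ_seven, mMat, nMat, cons_val_five', cons_val_six', cons_val_five'', Matrix.vecHead, Matrix.vecTail]
  · simp [Matrix.mul_apply, Fin.sum_univ_seven, mMat, nMat, cons_val_five', cons_val_six', cons_val_five'', Matrix.vecHead, Matrix.vecTail]
    linear_combination (0 : R) * hΔ
  · simp [Matrix.mul_apply, Fin.sum_univ_seven, mMat, nMat, cons_val_five', cons_val_six', cons_val_five'', Matrix.vecHead, Matrix.vecTail]
    linear_combination (0 : R) * hΔ
  · simp [Matrix.mul_apply, Fin.sum_univ_seven, mMat, nMat, cons_val_five', cons_val_six', cons_val_five'', Matrix.vecHead, Matrix.vecTail]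
    linear_combination (a^2*d^2*e^2 - 2*a*b*c*d*e^2 + b^2*c^2*e^2 + a*d*e - b*c*e + 1) * hΔ
  · simp [Matrix.mul_apply, Fin.sum_univ_seven, mMat, nMat, cons_val_five', cons_val_six', cons_val_five'', Matrix.vecHead, Matrix.vecTail]
    linear_combination (a^2*d*e*w3 + a^2*c*e*w4 + 2*a*b*d*e*w2 + 2*a*b*c*e*w3 + b^2*d*e*w1 + b^2*c*e*w2) * hΔ
  · simp [Matrix.mul_apply, Fin.sum_univ_seven, mMat, nMat, cons_val_five', cons_val_six', cons_val_five'', Matrix.vecHead, Matrix.vecTail]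
    linear_combination (a^3*e*w4 + 3*a^2*b*e*w3 + 3*a*b^2*e*w2 + b^3*e*w1) * hΔ
  · simp [Matrix.mul_apply, Fin.sum_univ_seven, mMat, nMat, cons_val_five', cons_val_six', cons_val_five'', Matrix.vecHead, Matrix.vecTail]
  · simp [Matrix.mul_apply, Fin.sum_univ_seven, mMat, nMat, cons_val_five', cons_val_six', cons_val_five'', Matrix.vecHead, Matrix.vecTail]
  · simp [Matrix.mul_apply, Fin.sum_univ_seven, mMat, nMat, cons_val_five', cons_val_six', cons_val_five'', Matrix.vecHead, Matrix.vecTail]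
  · simp [Matrix.mul_apply, Fin.sum_univ_seven, mMat, nMat, cons_val_five', cons_val_six', cons_val_five'', Matrix.vecHead, Matrix.vecTail]
  · simp [Matrix.mul_apply, Fin.sum_univ_seven, mMat, nMat, cons_val_five', cons_val_six', cons_val_five'', Matrix.vecHead, Matrix.vecTail]
  · simp [Matrix.mul_apply, Fin.sum_univ_seven, mMat, nMat, cons_val_five', cons_val_six', cons_val_five'', Matrix.vecHead, Matrix.vecTail]
    linear_combination (a*d*e - b*c*e + 1) * hΔ
  · simp [Matrix.mul_apply, Fin.sum_univ_seven, mMat, nMat, cons_val_five', cons_val_six', cons_val_five'', Matrix.vecHead, Matrix.vecTail]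
    linear_combination (0 : R) * hΔ
  · simp [Matrix.mul_apply, Fin.sum_univ_seven, mMat, nMat, cons_val_five', cons_val_six', cons_val_five'', Matrix.vecHead, Matrix.vecTail]
  · simp [Matrix.mul_apply, Fin.sum_univ_seven, mMat, nMat, cons_val_five', cons_val_six', cons_val_five'', Matrix.vecHead, Matrix.vecTail]
  · simp [Matrix.mul_apply, Fin.sum_univ_seven, mMat, nMat, cons_val_five', cons_val_six', cons_val_five'', Matrix.vecHead, Matrix.vecTail]
  · simp [Matrix.mul_apply, Fin.sum_univ_seven, mMat, nMat, cons_val_five', cons_val_six', cons_val_five'', Matrix.vecHead, Matrix.vecTail]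
  · simp [Matrix.mul_apply, Fin.sum_univ_seven, mMat, nMat, cons_val_five', cons_val_six', cons_val_five'', Matrix.vecHead, Matrix.vecTail]
  · simp [Matrix.mul_apply, Fin.sum_univ_seven, mMat, nMat, cons_val_five', cons_val_six', cons_val_five'', Matrix.vecHead, Matrix.vecTail]
    linear_combination (0 : R) * hΔ
  · simp [Matrix.mul_apply, Fin.sum_univ_seven, mMat, nMat, cons_val_five', cons_val_six', cons_val_five'', Matrix.vecHead, Matrix.vecTail]
    linear_combination (a*d*e - b*c*e + 1) * hΔ
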